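/- arXiv:2411.03123 — 6 statements merged into one kernel-verified Lean document; each statement's English description precedes it below -/
import Mathlib

section
/- Let r : Ω → ℝ be measurable and q : Ω → ℝ measurable with 1 ≤ q⁻ ≤ q⁺ < ∞, and assume 0 < r⁻ := ess inf r and r(x) ≤ q(x) for all x ∈ Ω (so r⁺ := ess sup r ≤ q⁺ < ∞). Then for every f ∈ L^{q(x)}(Ω), min{‖f‖_{q(x)}^{r⁺}, ‖f‖_{q(x)}^{r⁻}} ≤ ‖ |f|^{r(x)} ‖_{q(x)/r(x)} ≤ max{‖f‖_{q(x)}^{r⁺}, ‖f‖_{q(x)}^{r⁻}}, where ‖·‖_{q(x)/r(x)} is the Luxemburg norm associated with the exponent x ↦ q(x)/r(x). -/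
open MeasureTheory Filter Topology

/-- Measurability of real rpow with nonnegative base. -/
lemma measurable_rpow_aux {α : Type*} [MeasurableSpace α] {a b : α → ℝ}
    (ha : Measurable a) (hnn : ∀ x, 0 ≤ a x) (hb : Measurable b) :
    Measurable fun x => a x ^ b x := by
  have h : ∀ x, a x ^ b x =
      if a x = 0 then (if b x = 0 then 1 else 0) else Real.exp (Real.log (a x) * b x) :=
    fun x => Real.rpow_def_of_nonneg (hnn x) _
  simp_rw [h]
  refine Measurable.ite (ha (measurableSet_singleton 0)) ?_ ?_
  · exact Measurable.ite (hb (measurableSet_singleton 0)) measurable_const measurable_const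
  · exact Real.measurable_exp.comp ((Real.measurable_log.comp ha).mul hb)

/-- The Luxemburg norm associated to a variable exponent `p` on a set `Ω ⊆ ℝⁿ`. -/
noncomputable def luxNorm {n : ℕ} (Ω : Set (Fin n → ℝ)) (p u : (Fin n → ℝ) → ℝ) : ℝ :=
  sInf {l : ℝ | 0 < l ∧ (∫ x in Ω, |u x / l| ^ p x) ≤ 1}

/-- Relation between the Luxemburg norms of `|f|^{r(x)}` (for the exponent `q(x)/r(x)`)
and of `f` (for the exponent `q(x)`), with `r⁺ = esssup r` and `r⁻ = essinf r`. -/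
theorem luxNorm_rpow_estimate
    {n : ℕ} (Ω : Set (Fin n → ℝ)) (hΩ : MeasurableSet Ω)
    (q : (Fin n → ℝ) → ℝ) (hqmeas : Measurable q)
    (hqlb : ∀ᵐ x ∂(volume.restrict Ω), 1 ≤ q x)
    (hqub : ∃ M : ℝ, ∀ᵐ x ∂(volume.restrict Ω), q x ≤ M)
    (r : (Fin n → ℝ) → ℝ) (hrmeas : Measurable r) (hrnn : ∀ x, 0 ≤ r x)
    (hr0 : 0 < essInf r (volume.restrict Ω))
    (hrq : ∀ x ∈ Ω, r x ≤ q x)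
    (f : (Fin n → ℝ) → ℝ) (hf : Measurable f)
    (hfmem : IntegrableOn (fun x => |f x| ^ q x) Ω) :
    min (luxNorm Ω q f ^ essSup r (volume.restrict Ω))
        (luxNorm Ω q f ^ essInf r (volume.restrict Ω)) ≤
      luxNorm Ω (fun x => q x / r x) (fun x => |f x| ^ r x) ∧
    luxNorm Ω (fun x => q x / r x) (fun x => |f x| ^ r x) ≤
      max (luxNorm Ω q f ^ essSup r (volume.restrict Ω))
          (luxNorm Ω q f ^ essInf r (volume.restrict Ω)) := by
  classical
  set μ := volume.restrict Ω with hμdef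
  obtain ⟨M1, hqM1⟩ := hqub
  set M : ℝ := max M1 1 with hMdef
  have hqM : ∀ᵐ x ∂μ, q x ≤ M := hqM1.mono fun x hx => le_trans hx (le_max_left _ _)
  have hM1 : (1:ℝ) ≤ M := le_max_right _ _
  set rm := essInf r μ with hrmdef
  set rM := essSup r μ with hrMdef
  have hμne : μ ≠ 0 := by
    intro h
    rw [hrmdef, h] at hr0
    simp [essInf, Filter.liminf, Filter.limsInf, Real.sSup_univ] at hr0
  have hrle : ∀ᵐ x ∂μ, r x ≤ q x := by
    filter_upwards [ae_restrict_mem hΩ] with x hx using hrq x hx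
  have hrM' : ∀ᵐ x ∂μ, r x ≤ M := by
    filter_upwards [hrle, hqM] with x h1 h2 using le_trans h1 h2
  have hbdd : IsBoundedUnder (· ≤ ·) (ae μ) r := ⟨M, eventually_map.mpr hrM'⟩
  have hbdd' : IsBoundedUnder (· ≥ ·) (ae μ) r :=
    ⟨0, eventually_map.mpr (Eventually.of_forall hrnn)⟩
  have hrmle : ∀ᵐ x ∂μ, rm ≤ r x := ae_essInf_le hbdd'
  have hrMle : ∀ᵐ x ∂μ, r x ≤ rM := ae_le_essSup hbdd
  have hP : ∀ᵐ x ∂μ, 1 ≤ q x ∧ q x ≤ M ∧ rm ≤ r x ∧ r x ≤ rM ∧ r x ≤ q x := by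
    filter_upwards [hqlb, hqM, hrmle, hrMle, hrle] with x h1 h2 h3 h4 h5
    exact ⟨h1, h2, h3, h4, h5⟩
  have hrm0 : 0 < rm := hr0
  have hrM0 : 0 < rM := by
    have hne : (ae μ).NeBot := ae_neBot.mpr hμne
    obtain ⟨x, hx⟩ := hP.exists
    exact lt_of_lt_of_le hrm0 (le_trans hx.2.2.1 hx.2.2.2.1)
  set S : Set ℝ := {l : ℝ | 0 < l ∧ (∫ x in Ω, |f x / l| ^ q x) ≤ 1} with hSdef
  set T : Set ℝ := {l : ℝ | 0 < l ∧
      (∫ x in Ω, |(|f x| ^ r x) / l| ^ (q x / r x)) ≤ 1} with hTdef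
  have hKdef : luxNorm Ω q f = sInf S := rfl
  have hNdef : luxNorm Ω (fun x => q x / r x) (fun x => |f x| ^ r x) = sInf T := rfl
  set K := sInf S with hK
  set N := sInf T with hN
  rw [hKdef, hNdef]
  have hSbdd : BddBelow S := ⟨0, fun l hl => hl.1.le⟩
  have hTbdd : BddBelow T := ⟨0, fun l hl => hl.1.le⟩
  have hfq_nn : ∀ x, 0 ≤ |f x| ^ q x := fun x => Real.rpow_nonneg (abs_nonneg _) _
  have hfint : Integrable (fun x => |f x| ^ q x) μ := hfmem
  have hfmeas : Measurable fun x => |f x| ^ q x :=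
    measurable_rpow_aux hf.abs (fun x => abs_nonneg _) hqmeas
  -- rewriting the two kinds of integrals
  have eq2 : ∀ l : ℝ, 0 < l →
      (∫ x in Ω, |f x / l| ^ q x) = ∫ x in Ω, |f x| ^ q x / l ^ q x := by
    intro l hl
    refine integral_congr_ae (Eventually.of_forall fun x => ?_)
    show |f x / l| ^ q x = |f x| ^ q x / l ^ q x
    rw [abs_div, abs_of_pos hl, Real.div_rpow (abs_nonneg _) hl.le]
  have eq1 : ∀ m : ℝ, 0 < m →
      (∫ x in Ω, |(|f x| ^ r x) / m| ^ (q x / r x))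
        = ∫ x in Ω, |f x| ^ q x / m ^ (q x / r x) := by
    intro m hm
    refine integral_congr_ae ?_
    filter_upwards [hP] with x hx
    have hrx : 0 < r x := lt_of_lt_of_le hrm0 hx.2.2.1
    show |(|f x| ^ r x) / m| ^ (q x / r x) = |f x| ^ q x / m ^ (q x / r x)
    rw [abs_of_nonneg (div_nonneg (Real.rpow_nonneg (abs_nonneg _) _) hm.le),
      Real.div_rpow (Real.rpow_nonneg (abs_nonneg _) _) hm.le,
      ← Real.rpow_mul (abs_nonneg _)]
    congr 2
    field_simp
  -- dominated integrability
  have hDom : ∀ (C : ℝ) (g : (Fin n → ℝ) → ℝ), Measurable g →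
      (∀ᵐ x ∂μ, 0 ≤ g x ∧ g x ≤ C * (|f x| ^ q x)) → Integrable g μ := by
    intro C g hg hae
    refine Integrable.mono' (hfint.const_mul C) hg.aestronglyMeasurable ?_
    filter_upwards [hae] with x hx
    rw [Real.norm_eq_abs, abs_of_nonneg hx.1]
    exact hx.2
  -- integrability of |f|^q / c^(e x) for exponents bounded in [0, E]
  have hIntGen : ∀ (e : (Fin n → ℝ) → ℝ), Measurable e → ∀ E : ℝ,
      (∀ᵐ x ∂μ, 0 ≤ e x ∧ e x ≤ E) →
      ∀ c : ℝ, 0 < c → Integrable (fun x => |f x| ^ q x / c ^ e x) μ := by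
    intro e hemeas E hE c hc
    have hgmeas : Measurable fun x => |f x| ^ q x / c ^ e x :=
      hfmeas.div (measurable_rpow_aux measurable_const (fun _ => hc.le) hemeas)
    set m0 : ℝ := min 1 (c ^ E) with hm0
    have hm0pos : 0 < m0 := lt_min one_pos (Real.rpow_pos_of_pos hc _)
    refine hDom m0⁻¹ _ hgmeas ?_
    filter_upwards [hE] with x hx
    have hlow : m0 ≤ c ^ e x := by
      rcases le_or_gt 1 c with hc1 | hc1
      · refine le_trans (min_le_left _ _) ?_
        have := Real.rpow_le_rpow_of_exponent_le hc1 hx.1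
        rwa [Real.rpow_zero] at this
      · exact le_trans (min_le_right _ _)
          (Real.rpow_le_rpow_of_exponent_ge hc hc1.le hx.2)
    constructor
    · exact div_nonneg (hfq_nn x) (Real.rpow_nonneg hc.le _)
    · rw [← div_eq_inv_mul]
      gcongr
  have hInt1 : ∀ c : ℝ, 0 < c →
      Integrable (fun x => |f x| ^ q x / c ^ (q x / r x)) μ := by
    intro c hc
    refine hIntGen _ (hqmeas.div hrmeas) (M / rm) ?_ c hc
    filter_upwards [hP] with x hx
    have hrx : 0 < r x := lt_of_lt_of_le hrm0 hx.2.2.1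
    exact ⟨div_nonneg (by linarith [hx.1]) hrx.le,
      div_le_div₀ (by linarith) hx.2.1 hrm0 hx.2.2.1⟩
  have hInt2 : ∀ c : ℝ, 0 < c →
      Integrable (fun x => |f x| ^ q x / c ^ q x) μ := by
    intro c hc
    refine hIntGen _ hqmeas M ?_ c hc
    filter_upwards [hP] with x hx
    exact ⟨by linarith [hx.1], hx.2.1⟩
  -- integral monotonicity in the denominator exponent
  have hMono : ∀ (e1 e2 : (Fin n → ℝ) → ℝ) (c : ℝ), 0 < c →
      Integrable (fun x => |f x| ^ q x / c ^ e2 x) μ →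
      (∀ᵐ x ∂μ, c ^ e2 x ≤ c ^ e1 x) →
      (∫ x in Ω, |f x| ^ q x / c ^ e1 x) ≤ ∫ x in Ω, |f x| ^ q x / c ^ e2 x := by
    intro e1 e2 c hc hint hae
    refine integral_mono_of_nonneg ?_ hint ?_
    · exact Eventually.of_forall fun x => div_nonneg (hfq_nn x) (Real.rpow_nonneg hc.le _)
    · filter_upwards [hae] with x hx
      gcongr
  -- transfer claims
  have claim1 : ∀ l, l ∈ S → 1 ≤ l → l ^ rM ∈ T := by
    intro l hl hl1
    have hl0 : 0 < l := hl.1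
    have hm : 0 < l ^ rM := Real.rpow_pos_of_pos hl0 _
    refine ⟨hm, ?_⟩
    rw [eq1 _ hm]
    have heq : (∫ x in Ω, |f x| ^ q x / (l ^ rM) ^ (q x / r x))
        = ∫ x in Ω, |f x| ^ q x / l ^ (rM * (q x / r x)) := by
      refine integral_congr_ae (Eventually.of_forall fun x => ?_)
      show |f x| ^ q x / (l ^ rM) ^ (q x / r x) = |f x| ^ q x / l ^ (rM * (q x / r x))
      rw [← Real.rpow_mul hl0.le]
    rw [heq]
    have hae : ∀ᵐ x ∂μ, l ^ q x ≤ l ^ (rM * (q x / r x)) := by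
      filter_upwards [hP] with x hx
      have hrx : 0 < r x := lt_of_lt_of_le hrm0 hx.2.2.1
      have hqr_nn : 0 ≤ q x / r x := div_nonneg (by linarith [hx.1]) hrx.le
      have hexp : q x ≤ rM * (q x / r x) := by
        calc q x = r x * (q x / r x) := by field_simp
          _ ≤ rM * (q x / r x) := mul_le_mul_of_nonneg_right hx.2.2.2.1 hqr_nn
      exact Real.rpow_le_rpow_of_exponent_le hl1 hexp
    calc (∫ x in Ω, |f x| ^ q x / l ^ (rM * (q x / r x)))
        ≤ ∫ x in Ω, |f x| ^ q x / l ^ q x := hMono _ _ l hl0 (hInt2 l hl0) hae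
      _ = ∫ x in Ω, |f x / l| ^ q x := (eq2 l hl0).symm
      _ ≤ 1 := hl.2
  have claim2 : ∀ l, l ∈ S → l ≤ 1 → l ^ rm ∈ T := by
    intro l hl hl1
    have hl0 : 0 < l := hl.1
    have hm : 0 < l ^ rm := Real.rpow_pos_of_pos hl0 _
    refine ⟨hm, ?_⟩
    rw [eq1 _ hm]
    have heq : (∫ x in Ω, |f x| ^ q x / (l ^ rm) ^ (q x / r x))
        = ∫ x in Ω, |f x| ^ q x / l ^ (rm * (q x / r x)) := by
      refine integral_congr_ae (Eventually.of_forall fun x => ?_)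
      show |f x| ^ q x / (l ^ rm) ^ (q x / r x) = |f x| ^ q x / l ^ (rm * (q x / r x))
      rw [← Real.rpow_mul hl0.le]
    rw [heq]
    have hae : ∀ᵐ x ∂μ, l ^ q x ≤ l ^ (rm * (q x / r x)) := by
      filter_upwards [hP] with x hx
      have hrx : 0 < r x := lt_of_lt_of_le hrm0 hx.2.2.1
      have hqr_nn : 0 ≤ q x / r x := div_nonneg (by linarith [hx.1]) hrx.le
      have hexp : rm * (q x / r x) ≤ q x := by
        calc rm * (q x / r x) ≤ r x * (q x / r x) :=
              mul_le_mul_of_nonneg_right hx.2.2.1 hqr_nn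
          _ = q x := by field_simp
      exact Real.rpow_le_rpow_of_exponent_ge hl0 hl1 hexp
    calc (∫ x in Ω, |f x| ^ q x / l ^ (rm * (q x / r x)))
        ≤ ∫ x in Ω, |f x| ^ q x / l ^ q x := hMono _ _ l hl0 (hInt2 l hl0) hae
      _ = ∫ x in Ω, |f x / l| ^ q x := (eq2 l hl0).symm
      _ ≤ 1 := hl.2
  have claim3 : ∀ m, m ∈ T → 1 ≤ m → m ^ (1 / rm) ∈ S := by
    intro m hm hm1
    have hm0 : 0 < m := hm.1
    have hl : 0 < m ^ (1 / rm) := Real.rpow_pos_of_pos hm0 _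
    refine ⟨hl, ?_⟩
    rw [eq2 _ hl]
    have heq : (∫ x in Ω, |f x| ^ q x / (m ^ (1 / rm)) ^ q x)
        = ∫ x in Ω, |f x| ^ q x / m ^ (1 / rm * q x) := by
      refine integral_congr_ae (Eventually.of_forall fun x => ?_)
      show |f x| ^ q x / (m ^ (1 / rm)) ^ q x = |f x| ^ q x / m ^ (1 / rm * q x)
      rw [← Real.rpow_mul hm0.le]
    rw [heq]
    have hae : ∀ᵐ x ∂μ, m ^ (q x / r x) ≤ m ^ (1 / rm * q x) := by
      filter_upwards [hP] with x hx
      have hrx : 0 < r x := lt_of_lt_of_le hrm0 hx.2.2.1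
      have hexp : q x / r x ≤ 1 / rm * q x := by
        rw [one_div, inv_mul_eq_div]
        gcongr
        · linarith [hx.1]
        · exact hx.2.2.1
      exact Real.rpow_le_rpow_of_exponent_le hm1 hexp
    calc (∫ x in Ω, |f x| ^ q x / m ^ (1 / rm * q x))
        ≤ ∫ x in Ω, |f x| ^ q x / m ^ (q x / r x) := hMono _ _ m hm0 (hInt1 m hm0) hae
      _ = ∫ x in Ω, |(|f x| ^ r x) / m| ^ (q x / r x) := (eq1 m hm0).symm
      _ ≤ 1 := hm.2
  have claim4 : ∀ m, m ∈ T → m ≤ 1 → m ^ (1 / rM) ∈ S := by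
    intro m hm hm1
    have hm0 : 0 < m := hm.1
    have hl : 0 < m ^ (1 / rM) := Real.rpow_pos_of_pos hm0 _
    refine ⟨hl, ?_⟩
    rw [eq2 _ hl]
    have heq : (∫ x in Ω, |f x| ^ q x / (m ^ (1 / rM)) ^ q x)
        = ∫ x in Ω, |f x| ^ q x / m ^ (1 / rM * q x) := by
      refine integral_congr_ae (Eventually.of_forall fun x => ?_)
      show |f x| ^ q x / (m ^ (1 / rM)) ^ q x = |f x| ^ q x / m ^ (1 / rM * q x)
      rw [← Real.rpow_mul hm0.le]
    rw [heq]
    have hae : ∀ᵐ x ∂μ, m ^ (q x / r x) ≤ m ^ (1 / rM * q x) := by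
      filter_upwards [hP] with x hx
      have hrx : 0 < r x := lt_of_lt_of_le hrm0 hx.2.2.1
      have hexp : 1 / rM * q x ≤ q x / r x := by
        rw [one_div, inv_mul_eq_div]
        gcongr
        · linarith [hx.1]
        · exact hx.2.2.2.1
      exact Real.rpow_le_rpow_of_exponent_ge hm0 hm1 hexp
    calc (∫ x in Ω, |f x| ^ q x / m ^ (1 / rM * q x))
        ≤ ∫ x in Ω, |f x| ^ q x / m ^ (q x / r x) := hMono _ _ m hm0 (hInt1 m hm0) hae
      _ = ∫ x in Ω, |(|f x| ^ r x) / m| ^ (q x / r x) := (eq1 m hm0).symm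
      _ ≤ 1 := hm.2
  -- nonemptiness
  set I := ∫ x in Ω, |f x| ^ q x with hI
  have hI0 : 0 ≤ I := integral_nonneg hfq_nn
  have hl01 : (1:ℝ) ≤ I + 1 := by linarith
  have hl00 : (0:ℝ) < I + 1 := by linarith
  have hS0 : (I + 1) ∈ S := by
    refine ⟨hl00, ?_⟩
    rw [eq2 _ hl00]
    have hstep : (∫ x in Ω, |f x| ^ q x / (I + 1) ^ q x)
        ≤ ∫ x in Ω, |f x| ^ q x / (I + 1) := by
      refine integral_mono_of_nonneg
        (Eventually.of_forall fun x => div_nonneg (hfq_nn x) (Real.rpow_nonneg hl00.le _))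
        (hfint.div_const _) ?_
      filter_upwards [hqlb] with x hx
      have hbase : (I + 1) ≤ (I + 1) ^ q x := by
        calc (I + 1) = (I + 1) ^ (1:ℝ) := (Real.rpow_one _).symm
          _ ≤ (I + 1) ^ q x := Real.rpow_le_rpow_of_exponent_le hl01 hx
      gcongr
    calc (∫ x in Ω, |f x| ^ q x / (I + 1) ^ q x)
        ≤ ∫ x in Ω, |f x| ^ q x / (I + 1) := hstep
      _ = I / (I + 1) := by rw [integral_div]
      _ ≤ 1 := by rw [div_le_one hl00]; linarith
  have hSne : S.Nonempty := ⟨_, hS0⟩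
  have hTne : T.Nonempty := ⟨_, claim1 _ hS0 hl01⟩
  have hKnn : 0 ≤ K := Real.sInf_nonneg fun l hl => hl.1.le
  have hNnn : 0 ≤ N := Real.sInf_nonneg fun l hl => hl.1.le
  constructor
  · -- lower bound
    refine le_csInf hTne ?_
    intro m hm
    rcases le_or_gt 1 m with h1 | h1
    · have hKm : K ≤ m ^ (1 / rm) := csInf_le hSbdd (claim3 m hm h1)
      have h2 : K ^ rm ≤ (m ^ (1 / rm)) ^ rm := Real.rpow_le_rpow hKnn hKm hrm0.le
      rw [← Real.rpow_mul hm.1.le, one_div, inv_mul_cancel₀ hrm0.ne', Real.rpow_one] at h2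
      exact le_trans (min_le_right _ _) h2
    · have hKm : K ≤ m ^ (1 / rM) := csInf_le hSbdd (claim4 m hm h1.le)
      have h2 : K ^ rM ≤ (m ^ (1 / rM)) ^ rM := Real.rpow_le_rpow hKnn hKm hrM0.le
      rw [← Real.rpow_mul hm.1.le, one_div, inv_mul_cancel₀ hrM0.ne', Real.rpow_one] at h2
      exact le_trans (min_le_left _ _) h2
  · -- upper bound
    rcases le_or_gt 1 K with hK1 | hK1
    · have hstep : ∀ l ∈ S, N ^ (1 / rM) ≤ l := by
        intro l hl
        have hl1 : 1 ≤ l := le_trans hK1 (csInf_le hSbdd hl)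
        have hNl : N ≤ l ^ rM := csInf_le hTbdd (claim1 l hl hl1)
        have h2 := Real.rpow_le_rpow hNnn hNl (by positivity : (0:ℝ) ≤ 1 / rM)
        rwa [← Real.rpow_mul hl.1.le, mul_one_div, div_self hrM0.ne', Real.rpow_one] at h2
      have hNK : N ^ (1 / rM) ≤ K := le_csInf hSne hstep
      have h2 := Real.rpow_le_rpow (Real.rpow_nonneg hNnn _) hNK hrM0.le
      rw [← Real.rpow_mul hNnn, one_div, inv_mul_cancel₀ hrM0.ne', Real.rpow_one] at h2
      exact le_trans h2 (le_max_left _ _)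
    · obtain ⟨l₁, hl₁S, hl₁⟩ := exists_lt_of_csInf_lt hSne hK1
      have hN1 : N < 1 := lt_of_le_of_lt (csInf_le hTbdd (claim2 l₁ hl₁S hl₁.le))
        (Real.rpow_lt_one hl₁S.1.le hl₁ hrm0)
      have hstep : ∀ l ∈ S, N ^ (1 / rm) ≤ l := by
        intro l hl
        rcases le_or_gt l 1 with h1 | h1
        · have hNl : N ≤ l ^ rm := csInf_le hTbdd (claim2 l hl h1)
          have h2 := Real.rpow_le_rpow hNnn hNl (by positivity : (0:ℝ) ≤ 1 / rm)
          rwa [← Real.rpow_mul hl.1.le, mul_one_div, div_self hrm0.ne', Real.rpow_one] at h2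
        · exact le_trans (Real.rpow_le_one hNnn hN1.le (by positivity)) h1.le
      have hNK : N ^ (1 / rm) ≤ K := le_csInf hSne hstep
      have h2 := Real.rpow_le_rpow (Real.rpow_nonneg hNnn _) hNK hrm0.le
      rw [← Real.rpow_mul hNnn, one_div, inv_mul_cancel₀ hrm0.ne', Real.rpow_one] at h2
      exact le_trans h2 (le_max_right _ _)
end

section
/- Let E be a bounded open set in X, let T : Ē → X* be bounded, continuous and of class (S_+), and let S : D(S) ⊆ X* → X be demicontinuous and of class (S_+) (i.e., v_n ⇀ v in X* and limsup_n (v_n − v)(S v_n) ≤ 0 imply v_n → v strongly in X*), with T(Ē) ⊆ D(S). Then S∘T : Ē → X is demicontinuous as a map into X and of class (S_+)_T. -/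
open Filter Topology

/-- Weak convergence of a sequence in a normed space. -/
def WeakConv {X : Type*} [NormedAddCommGroup X] [NormedSpace ℝ X] (u : ℕ → X) (x : X) : Prop :=
  ∀ f : X →L[ℝ] ℝ, Tendsto (fun k => f (u k)) atTop (𝓝 (f x))

/-- Weak convergence of a sequence in the dual of a reflexive space, tested (via the
canonical identification `X ≅ X**`) against elements of `X`. -/
def WeakConvDual {X : Type*} [NormedAddCommGroup X] [NormedSpace ℝ X]
    (v : ℕ → X →L[ℝ] ℝ) (w : X →L[ℝ] ℝ) : Prop :=
  ∀ x : X, Tendsto (fun k => v k x) atTop (𝓝 (w x))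

/-- If `T : Ē → X*` is bounded, continuous and of class `(S₊)` and `S : D(S) ⊆ X* → X`
is demicontinuous and of class `(S₊)` with `T(Ē) ⊆ D(S)`, then `S ∘ T` is
demicontinuous (into `X`, weakly) and of class `(S₊)_T`. -/
theorem comp_Splus_is_SplusT
    {X : Type*} [NormedAddCommGroup X] [NormedSpace ℝ X] [CompleteSpace X]
    (hrefl : Function.Surjective (NormedSpace.inclusionInDoubleDual ℝ X))
    (E : Set X) (hEo : IsOpen E) (hEb : Bornology.IsBounded E)
    (T : X → X →L[ℝ] ℝ)
    (hTb : ∀ B ⊆ closure E, Bornology.IsBounded B → Bornology.IsBounded (T '' B))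
    (hTc : ContinuousOn T (closure E))
    (hTSplus : ∀ (u : ℕ → X) (ulim : X), (∀ k, u k ∈ closure E) → WeakConv u ulim →
      limsup (fun k => T (u k) (u k - ulim)) atTop ≤ 0 → Tendsto u atTop (𝓝 ulim))
    (D : Set (X →L[ℝ] ℝ)) (S : (X →L[ℝ] ℝ) → X)
    (hTD : ∀ u ∈ closure E, T u ∈ D)
    (hSdemi : ∀ (v : ℕ → X →L[ℝ] ℝ) (w : X →L[ℝ] ℝ), (∀ k, v k ∈ D) → w ∈ D →
      Tendsto v atTop (𝓝 w) → WeakConv (fun k => S (v k)) (S w))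
    (hSplus : ∀ (v : ℕ → X →L[ℝ] ℝ) (w : X →L[ℝ] ℝ), (∀ k, v k ∈ D) →
      WeakConvDual v w → limsup (fun k => (v k - w) (S (v k))) atTop ≤ 0 →
      Tendsto v atTop (𝓝 w)) :
    (∀ (u : ℕ → X) (ulim : X), (∀ k, u k ∈ closure E) → ulim ∈ closure E →
      Tendsto u atTop (𝓝 ulim) →
      WeakConv (fun k => S (T (u k))) (S (T ulim))) ∧
    (∀ (u : ℕ → X) (ulim : X) (y : X →L[ℝ] ℝ), (∀ k, u k ∈ closure E) →
      WeakConv u ulim → WeakConvDual (fun k => T (u k)) y →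
      limsup (fun k => (T (u k) - y) (S (T (u k)))) atTop ≤ 0 →
      Tendsto u atTop (𝓝 ulim)) := by
  constructor
  · intro u ulim hu hul htend
    have hT : Tendsto (fun k => T (u k)) atTop (𝓝 (T ulim)) := by
      have h1 : Tendsto u atTop (𝓝[closure E] ulim) :=
        tendsto_nhdsWithin_of_tendsto_nhds_of_eventually_within u htend
          (Eventually.of_forall hu)
      exact (hTc ulim hul).tendsto.comp h1
    exact hSdemi (fun k => T (u k)) (T ulim) (fun k => hTD _ (hu k)) (hTD _ hul) hT
  · intro u ulim y hu huw hTw hls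
    -- first, T u_k → y strongly in X*
    have hTy : Tendsto (fun k => T (u k)) atTop (𝓝 y) :=
      hSplus (fun k => T (u k)) y (fun k => hTD _ (hu k)) hTw hls
    -- bound on ‖u k - ulim‖
    obtain ⟨M, hM⟩ := (Bornology.IsBounded.closure hEb).exists_norm_le
    have hbound : ∀ k, ‖u k - ulim‖ ≤ M + ‖ulim‖ := by
      intro k
      calc ‖u k - ulim‖ ≤ ‖u k‖ + ‖ulim‖ := norm_sub_le _ _
        _ ≤ M + ‖ulim‖ := by linarith [hM _ (hu k)]
    -- T u_k (u_k - ulim) → 0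
    have h1 : Tendsto (fun k => (T (u k) - y) (u k - ulim)) atTop (𝓝 0) := by
      have hn : Tendsto (fun k => ‖T (u k) - y‖ * (M + ‖ulim‖)) atTop (𝓝 0) := by
        have : Tendsto (fun k => ‖T (u k) - y‖) atTop (𝓝 0) := by
          have := (tendsto_sub_nhds_zero_iff.mpr hTy).norm
          simpa using this
        simpa using this.mul_const (M + ‖ulim‖)
      apply squeeze_zero_norm _ hn
      intro k
      calc ‖(T (u k) - y) (u k - ulim)‖ ≤ ‖T (u k) - y‖ * ‖u k - ulim‖ :=
            (T (u k) - y).le_opNorm _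
        _ ≤ ‖T (u k) - y‖ * (M + ‖ulim‖) :=
            mul_le_mul_of_nonneg_left (hbound k) (norm_nonneg _)
    have h2 : Tendsto (fun k => y (u k - ulim)) atTop (𝓝 0) := by
      have := huw y
      have h := this.sub (tendsto_const_nhds (x := y ulim))
      simpa [map_sub] using h
    have h3 : Tendsto (fun k => T (u k) (u k - ulim)) atTop (𝓝 0) := by
      have := h1.add h2
      simp only [ContinuousLinearMap.sub_apply] at this
      simpa using this
    apply hTSplus u ulim hu huw
    rw [h3.limsup_eq]
end

section
/- For every real p with 1 < p < 2 and all ξ, η ∈ ℝ^n with (ξ, η) ≠ (0, 0): ( |ξ|^{p−2} ξ − |η|^{p−2} η ) · (ξ − η) ≥ (p − 1) |ξ − η|^2 / ( |ξ| + |η| )^{2−p}, where · denotes the Euclidean inner product and |·| the Euclidean norm. -/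
open RealInnerProductSpace

open Real in
lemma tangent_bound {q a b : ℝ} (hq0 : 0 < q) (hq1 : q ≤ 1) (ha : 0 < a) (hb : 0 ≤ b) :
    b ^ q ≤ a ^ q + q * a ^ (q - 1) * (b - a) := by
  have hs : -1 ≤ b / a - 1 := by
    have : 0 ≤ b / a := div_nonneg hb ha.le
    linarith
  have h := rpow_one_add_le_one_add_mul_self hs hq0.le hq1
  have h1 : (1 + (b / a - 1)) = b / a := by ring
  rw [h1, Real.div_rpow hb ha.le] at h
  have haq : 0 < a ^ q := Real.rpow_pos_of_pos ha q
  have h3 := (div_le_iff₀ haq).mp h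
  have key : a ^ (q - 1) = a ^ q / a := by
    rw [Real.rpow_sub ha, Real.rpow_one]
  calc b ^ q ≤ (1 + q * (b / a - 1)) * a ^ q := h3
    _ = a ^ q + q * (a ^ q / a) * (b - a) := by field_simp
    _ = a ^ q + q * a ^ (q - 1) * (b - a) := by rw [key]

lemma subadd_rpow {q a b : ℝ} (hq0 : 0 < q) (hq1 : q ≤ 1) (ha : 0 ≤ b) (hb : b ≤ a) :
    (a + b) ^ q ≤ a ^ q + b ^ q := by
  rcases eq_or_lt_of_le (ha.trans hb) with h0 | ha'
  · have hb0 : b = 0 := le_antisymm (hb.trans h0.symm.le) ha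
    simp [← h0, hb0, Real.zero_rpow hq0.ne']
  have h1 := tangent_bound hq0 hq1 ha' (by linarith : (0:ℝ) ≤ a + b)
  have h2 : q * a ^ (q - 1) * b ≤ b ^ q := by
    rcases eq_or_lt_of_le ha with hb0 | hb0
    · simp [← hb0, Real.zero_rpow hq0.ne']
    have hle : a ^ (q - 1) ≤ b ^ (q - 1) :=
      Real.rpow_le_rpow_of_nonpos hb0 hb (by linarith)
    have hbq : b * b ^ (q - 1) = b ^ q := by
      rw [← Real.rpow_one_add' (le_of_lt hb0) (by intro h; simp at h; linarith)]
      ring_nf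
    calc q * a ^ (q - 1) * b ≤ 1 * b ^ (q-1) * b := by
          apply mul_le_mul (mul_le_mul hq1 hle (by positivity) (by norm_num)) le_rfl ha
          positivity
      _ = b ^ q := by rw [← hbq]; ring
  nlinarith [h1, h2]

lemma F3_half {p a b : ℝ} (hp1 : 1 < p) (hp2 : p < 2) (hb : 0 ≤ b) (hba : b ≤ a)
    (hab : 0 < a + b) :
    (p - 1) * (a - b) ^ 2 ≤ (a ^ (p-1) - b ^ (p-1)) * (a - b) * (a + b) ^ (2 - p) := by
  have ha' : 0 < a := by linarith
  have ht := tangent_bound (q := p - 1) (by linarith) (by linarith) ha' hb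
  have hq1 : p - 1 - 1 = p - 2 := by ring
  rw [hq1] at ht
  -- a^(p-2) * (a+b)^(2-p) ≥ 1
  have hc : (a + b) ^ (p - 2) ≤ a ^ (p - 2) :=
    Real.rpow_le_rpow_of_nonpos ha' (by linarith) (by linarith)
  have hone : (a + b) ^ (p - 2) * (a + b) ^ (2 - p) = 1 := by
    rw [← Real.rpow_add hab]; norm_num
  have hD : 0 < (a + b) ^ (2 - p) := Real.rpow_pos_of_pos hab _
  have hcD : 1 ≤ a ^ (p - 2) * (a + b) ^ (2 - p) := by
    calc (1:ℝ) = (a + b) ^ (p - 2) * (a + b) ^ (2 - p) := hone.symm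
      _ ≤ a ^ (p - 2) * (a + b) ^ (2 - p) := by
          apply mul_le_mul_of_nonneg_right hc hD.le
  have hc0 : 0 ≤ a ^ (p - 2) := (Real.rpow_pos_of_pos ha' _).le
  have h1 : (p-1) * a^(p-2) * (a-b) ≤ a^(p-1) - b^(p-1) := by nlinarith [ht]
  have h2 := mul_le_mul_of_nonneg_right h1
    (mul_nonneg (sub_nonneg.2 hba) hD.le)
  nlinarith [h2, mul_le_mul_of_nonneg_left hcD
    (mul_nonneg (by linarith : (0:ℝ) ≤ p - 1) (sq_nonneg (a-b)))]

lemma F3_full {p a b : ℝ} (hp1 : 1 < p) (hp2 : p < 2) (ha : 0 ≤ a) (hb : 0 ≤ b)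
    (hab : 0 < a + b) :
    (p - 1) * (a - b) ^ 2 ≤ (a ^ (p-1) - b ^ (p-1)) * (a - b) * (a + b) ^ (2 - p) := by
  rcases le_total b a with h | h
  · exact F3_half hp1 hp2 hb h hab
  · have := F3_half hp1 hp2 ha h (by linarith)
    have e1 : (b - a) ^ 2 = (a - b) ^ 2 := by ring
    have e2 : (b ^ (p-1) - a ^ (p-1)) * (b - a) = (a ^ (p-1) - b ^ (p-1)) * (a - b) := by ring
    have e3 : b + a = a + b := by ring
    rw [e1, e2, e3] at this
    exact this

lemma F2_full {p a b : ℝ} (hp1 : 1 < p) (hp2 : p < 2) (ha : 0 ≤ a) (hb : 0 ≤ b)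
    (hab : 0 < a + b) :
    (p - 1) * (a + b) ^ 2 ≤ (a ^ (p-1) + b ^ (p-1)) * (a + b) * (a + b) ^ (2 - p) := by
  have hsub : (a + b) ^ (p-1) ≤ a ^ (p-1) + b ^ (p-1) := by
    rcases le_total b a with h | h
    · exact subadd_rpow (by linarith) (by linarith) hb h
    · have := subadd_rpow (q := p - 1) (by linarith) (by linarith) ha h
      have e : b + a = a + b := by ring
      rw [e] at this; linarith
  have hone : (a + b) ^ (p - 1) * (a + b) ^ (2 - p) = a + b := by
    rw [← Real.rpow_add hab]; norm_num
  have hD : 0 < (a + b) ^ (2 - p) := Real.rpow_pos_of_pos hab _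
  have h2 := mul_le_mul_of_nonneg_right hsub hD.le
  rw [hone] at h2
  nlinarith [h2, mul_le_mul_of_nonneg_right h2 hab.le]

lemma scalar_key {p a b s : ℝ} (hp1 : 1 < p) (hp2 : p < 2) (ha : 0 ≤ a) (hb : 0 ≤ b)
    (hab : 0 < a + b) (hs1 : -(a*b) ≤ s) (hs2 : s ≤ a*b) :
    (p - 1) * (a*a + b*b - 2*s) ≤
      (a^(p-2)*(a*a) + b^(p-2)*(b*b) - (a^(p-2)+b^(p-2))*s) * (a+b)^(2-p) := by
  have hone : (1:ℝ) + (p - 2) = p - 1 := by ring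
  have hac : a * a ^ (p-2) = a ^ (p-1) := by
    rcases eq_or_lt_of_le ha with h | h
    · rw [← h, Real.zero_rpow (by intro hh; rw [sub_eq_zero] at hh; linarith),
        Real.zero_rpow (by intro hh; rw [sub_eq_zero] at hh; linarith)]; ring
    · rw [← Real.rpow_one_add' ha (by rw [hone]; intro hh; rw [sub_eq_zero] at hh; linarith), hone]
  have hbd : b * b ^ (p-2) = b ^ (p-1) := by
    rcases eq_or_lt_of_le hb with h | h
    · rw [← h, Real.zero_rpow (by intro hh; rw [sub_eq_zero] at hh; linarith),
        Real.zero_rpow (by intro hh; rw [sub_eq_zero] at hh; linarith)]; ring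
    · rw [← Real.rpow_one_add' hb (by rw [hone]; intro hh; rw [sub_eq_zero] at hh; linarith), hone]
  have hD : 0 < (a+b) ^ (2-p) := Real.rpow_pos_of_pos hab _
  have G1 := F3_full hp1 hp2 ha hb hab
  have G2 := F2_full hp1 hp2 ha hb hab
  have hA : a^(p-2)*(a*a) = a * a^(p-1) := by rw [← hac]; ring
  have hB : b^(p-2)*(b*b) = b * b^(p-1) := by rw [← hbd]; ring
  rcases eq_or_lt_of_le (mul_nonneg ha hb) with h0 | h0
  · have hs0 : s = 0 := le_antisymm (by linarith) (by linarith)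
    subst hs0
    rw [hA, hB]
    nlinarith [G1, G2]
  · rw [← mul_le_mul_iff_of_pos_right h0]
    have key : (a^(p-2)*(a*a) + b^(p-2)*(b*b) - (a^(p-2)+b^(p-2))*s) * (a+b)^(2-p) * (a*b)
        = ((a * a^(p-1) + b * b^(p-1)) * (a*b) - s * (b * a^(p-1) + a * b^(p-1)))
            * (a+b)^(2-p) := by
      rw [← hac, ← hbd]; ring
    rw [key]
    nlinarith [mul_nonneg (by linarith : (0:ℝ) ≤ a*b - s) (by linarith :
        (0:ℝ) ≤ (a^(p-1) + b^(p-1)) * (a + b) * (a+b)^(2-p) - (p-1)*(a+b)^2),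
      mul_nonneg (by linarith : (0:ℝ) ≤ a*b + s) (by linarith :
        (0:ℝ) ≤ (a^(p-1) - b^(p-1)) * (a - b) * (a+b)^(2-p) - (p-1)*(a-b)^2)]

/-- The singular monotonicity inequality for the `p`-Laplacian vector field, `1 < p < 2`:
`(|ξ|^{p-2}ξ − |η|^{p-2}η)·(ξ − η) ≥ (p−1)|ξ − η|²/(|ξ|+|η|)^{2−p}` for `(ξ,η) ≠ (0,0)`. -/
theorem pLaplace_monotonicity_singular (p : ℝ) (hp1 : 1 < p) (hp2 : p < 2) :
    ∀ (n : ℕ) (ξ η : EuclideanSpace ℝ (Fin n)), ¬(ξ = 0 ∧ η = 0) →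
      (p - 1) * ‖ξ - η‖ ^ (2 : ℝ) / (‖ξ‖ + ‖η‖) ^ (2 - p) ≤
        ⟪(‖ξ‖ ^ (p - 2)) • ξ - (‖η‖ ^ (p - 2)) • η, ξ - η⟫ := by
  intro n ξ η hne
  have hab : 0 < ‖ξ‖ + ‖η‖ := by
    rcases not_and_or.mp hne with h | h
    · have := norm_pos_iff.mpr h
      positivity
    · have := norm_pos_iff.mpr h
      positivity
  have hD : (0:ℝ) < (‖ξ‖ + ‖η‖) ^ (2 - p) := Real.rpow_pos_of_pos hab _
  have hs := abs_real_inner_le_norm ξ η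
  rw [abs_le] at hs
  have hnorm : ‖ξ - η‖ ^ (2:ℝ) = ‖ξ‖*‖ξ‖ + ‖η‖*‖η‖ - 2*⟪ξ, η⟫ := by
    rw [Real.rpow_two, norm_sub_sq_real]; ring
  have hinner : ⟪(‖ξ‖ ^ (p - 2)) • ξ - (‖η‖ ^ (p - 2)) • η, ξ - η⟫ =
      ‖ξ‖^(p-2)*(‖ξ‖*‖ξ‖) + ‖η‖^(p-2)*(‖η‖*‖η‖) - (‖ξ‖^(p-2)+‖η‖^(p-2))*⟪ξ, η⟫ := by
    simp only [inner_sub_left, inner_sub_right, real_inner_smul_left,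
      real_inner_self_eq_norm_mul_norm, real_inner_comm η ξ]
    ring
  rw [hinner, hnorm, div_le_iff₀ hD]
  have key := scalar_key (a := ‖ξ‖) (b := ‖η‖) (s := ⟪ξ, η⟫) hp1 hp2 (norm_nonneg ξ)
    (norm_nonneg η) hab (by linarith [hs.1]) hs.2
  linarith [key]
end

section
/- Continuity of the inverse of an (S_+)-operator: let F : X → X* be a bijection of class (S_+), and suppose its inverse T := F^{−1} : X* → X is bounded and demicontinuous. Then T is sequentially continuous: v_n → v strongly in X* implies T v_n → T v strongly in X. -/
open Filter Topology

/-- If `F : X → X*` is a bijection of class `(S₊)` whose inverse `T = F⁻¹` is bounded and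
demicontinuous, then `T` is sequentially continuous. -/
theorem inverse_of_Splus_operator_continuous
    {X : Type*} [NormedAddCommGroup X] [NormedSpace ℝ X] [CompleteSpace X]
    (hrefl : Function.Surjective (NormedSpace.inclusionInDoubleDual ℝ X))
    (F : X → X →L[ℝ] ℝ) (hFbij : Function.Bijective F)
    (hFSplus : ∀ (u : ℕ → X) (ulim : X), WeakConv u ulim →
      limsup (fun k => F (u k) (u k - ulim)) atTop ≤ 0 → Tendsto u atTop (𝓝 ulim))
    (T : (X →L[ℝ] ℝ) → X) (hTF : ∀ v, F (T v) = v) (hFT : ∀ u, T (F u) = u)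
    (hTb : ∀ B : Set (X →L[ℝ] ℝ), Bornology.IsBounded B → Bornology.IsBounded (T '' B))
    (hTdemi : ∀ (v : ℕ → X →L[ℝ] ℝ) (w : X →L[ℝ] ℝ), Tendsto v atTop (𝓝 w) →
      WeakConv (fun k => T (v k)) (T w))
    (v : ℕ → X →L[ℝ] ℝ) (w : X →L[ℝ] ℝ) (hv : Tendsto v atTop (𝓝 w)) :
    Tendsto (fun k => T (v k)) atTop (𝓝 (T w)) := by
  have hweak : WeakConv (fun k => T (v k)) (T w) := hTdemi v w hv
  set u : ℕ → X := fun k => T (v k) with hu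
  obtain ⟨C, hC⟩ : ∃ C, ∀ k, ‖u k‖ ≤ C := by
    have hb : Bornology.IsBounded (Set.range v) := Metric.isBounded_range_of_tendsto v hv
    obtain ⟨C, hC⟩ := (isBounded_iff_forall_norm_le.1 (hTb _ hb))
    exact ⟨C, fun k => hC (u k) ⟨v k, Set.mem_range_self k, rfl⟩⟩
  have hterm : Tendsto (fun k => F (u k) (u k - T w)) atTop (𝓝 0) := by
    have heq : ∀ k, F (u k) (u k - T w)
        = (v k - w) (u k - T w) + (w (u k) - w (T w)) := by
      intro k
      simp [hu, hTF, map_sub]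
      ring
    have h1 : Tendsto (fun k => (v k - w) (u k - T w)) atTop (𝓝 0) := by
      refine squeeze_zero_norm (a := fun k => ‖v k - w‖ * (C + ‖T w‖)) (fun k => ?_) ?_
      · calc ‖(v k - w) (u k - T w)‖ ≤ ‖v k - w‖ * ‖u k - T w‖ :=
              (v k - w).le_opNorm _
          _ ≤ ‖v k - w‖ * (C + ‖T w‖) := by
              apply mul_le_mul_of_nonneg_left _ (norm_nonneg _)
              exact (norm_sub_le _ _).trans (add_le_add_left (hC k) _)
      · have : Tendsto (fun k => ‖v k - w‖) atTop (𝓝 0) :=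
          tendsto_iff_norm_sub_tendsto_zero.1 hv
        simpa using this.mul_const (C + ‖T w‖)
    have h2 : Tendsto (fun k => w (u k) - w (T w)) atTop (𝓝 0) := by
      have := hweak w
      simpa using this.sub_const (w (T w))
    have := h1.add h2
    simp only [← heq] at this
    simpa using this
  apply hFSplus u (T w) hweak
  exact le_of_eq hterm.limsup_eq
end

section
/- Well-definedness of the Nemytskii map: assume f : Ω × ℝ × ℝ^n → ℝ is a Carathéodory function and there are a constant C > 0, an exponent q ∈ C(Ω̄) with 1 < q⁻, q(x) ≤ p_M(x) on Ω, a function k with ∫_Ω |k|^{q'(x)} dx < ∞ (q'(x) := q(x)/(q(x)−1)), and nonnegative measurable functions r_i with 1 < r_i(x) q'(x) ≤ p_i(x) on Ω, such that |f(x, s, ξ)| ≤ C ( |k(x)| + |s|^{q(x)−1} + Σ_{i=1}^n |ξ_i|^{r_i(x)} ) for a.e. x ∈ Ω and all (s, ξ) ∈ ℝ × ℝ^n. Then for every measurable u : Ω → ℝ with ∫_Ω |u|^{p_M(x)} dx < ∞ and every measurable g : Ω → ℝ^n with ∫_Ω |g_i|^{p_i(x)} dx < ∞ for all i, one has ∫_Ω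 |f(x, u(x), g(x))|^{q'(x)} dx < ∞. -/
open MeasureTheory Filter Topology

lemma aux_two (a b t Q : ℝ) (ha : 0 ≤ a) (hb : 0 ≤ b) (ht : 0 ≤ t) (htQ : t ≤ Q) :
    (a + b) ^ t ≤ 2 ^ Q * (a ^ t + b ^ t) := by
  have h2t : (2:ℝ) ^ t ≤ 2 ^ Q := Real.rpow_le_rpow_of_exponent_le one_le_two htQ
  rcases le_total a b with h | h
  · calc (a + b) ^ t ≤ (2 * b) ^ t := Real.rpow_le_rpow (by linarith) (by linarith) ht
      _ = 2 ^ t * b ^ t := Real.mul_rpow (by norm_num) hb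
      _ ≤ 2 ^ Q * (a ^ t + b ^ t) := by
        have h1 := Real.rpow_nonneg ha t
        have h2 := Real.rpow_nonneg hb t
        exact mul_le_mul h2t (by linarith) h2 (by positivity)
  · calc (a + b) ^ t ≤ (2 * a) ^ t := Real.rpow_le_rpow (by linarith) (by linarith) ht
      _ = 2 ^ t * a ^ t := Real.mul_rpow (by norm_num) ha
      _ ≤ 2 ^ Q * (a ^ t + b ^ t) := by
        have h1 := Real.rpow_nonneg ha t
        have h2 := Real.rpow_nonneg hb t
        exact mul_le_mul h2t (by linarith) h1 (by positivity)

lemma aux_sum {ι : Type*} (s : Finset ι) (a : ι → ℝ) (t Q : ℝ) (ha : ∀ j, 0 ≤ a j)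
    (ht : 0 < t) (htQ : t ≤ Q) :
    (∑ j ∈ s, a j) ^ t ≤ ((2:ℝ) ^ Q) ^ s.card * ∑ j ∈ s, a j ^ t := by
  have hQ0 : 0 ≤ Q := le_trans ht.le htQ
  have hP1 : (1:ℝ) ≤ 2 ^ Q := Real.one_le_rpow one_le_two hQ0
  classical
  induction s using Finset.induction_on with
  | empty => simp [Real.zero_rpow ht.ne']
  | @insert i s hi ih =>
    rw [Finset.sum_insert hi, Finset.sum_insert hi, Finset.card_insert_of_notMem hi]
    have hS : 0 ≤ ∑ j ∈ s, a j := Finset.sum_nonneg fun j _ => ha j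
    have hSt : 0 ≤ ∑ j ∈ s, a j ^ t := Finset.sum_nonneg fun j _ => Real.rpow_nonneg (ha j) t
    have hK1 : (1:ℝ) ≤ ((2:ℝ) ^ Q) ^ s.card := one_le_pow₀ hP1
    have hait : 0 ≤ a i ^ t := Real.rpow_nonneg (ha i) t
    calc (a i + ∑ j ∈ s, a j) ^ t ≤ 2 ^ Q * (a i ^ t + (∑ j ∈ s, a j) ^ t) :=
          aux_two _ _ _ _ (ha i) hS ht.le htQ
      _ ≤ 2 ^ Q * (a i ^ t + ((2:ℝ) ^ Q) ^ s.card * ∑ j ∈ s, a j ^ t) := by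
          have := ih
          gcongr
      _ ≤ ((2:ℝ) ^ Q) ^ (s.card + 1) * (a i ^ t + ∑ j ∈ s, a j ^ t) := by
          have hP0 : (0:ℝ) ≤ 2 ^ Q := by positivity
          rw [pow_succ]
          nlinarith [mul_nonneg (mul_nonneg hP0 hait) (sub_nonneg.2 hK1)]

lemma aux_pow_bound (a s p : ℝ) (ha : 0 ≤ a) (hs : 0 ≤ s) (hsp : s ≤ p) :
    a ^ s ≤ a ^ p + 1 := by
  rcases le_total a 1 with h | h
  · have := Real.rpow_le_one ha h hs
    have := Real.rpow_nonneg ha p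
    linarith
  · have := Real.rpow_le_rpow_of_exponent_le h hsp
    linarith

/-- Well-definedness of the Nemytskii map associated to a Carathéodory function `f` with
anisotropic nonstandard growth: `f(·, u(·), g(·)) ∈ L^{q'(x)}(Ω)` whenever `u` and the
components `gᵢ` have finite modulars for the exponents `p_M` and `pᵢ`. -/
theorem nemytskii_well_defined
    {n : ℕ} (hn : 3 ≤ n) (Ω : Set (Fin n → ℝ)) (hΩo : IsOpen Ω)
    (hΩb : Bornology.IsBounded Ω) (hΩc : IsConnected Ω)
    (p : Fin n → (Fin n → ℝ) → ℝ)
    (hpc : ∀ i, ContinuousOn (p i) (closure Ω))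
    (hp1 : ∀ i, ∀ x ∈ closure Ω, 1 < p i x)
    (pM : (Fin n → ℝ) → ℝ) (hpM : ∀ x, pM x = ⨆ i, p i x)
    (f : (Fin n → ℝ) → ℝ → (Fin n → ℝ) → ℝ)
    (hfmeas : ∀ (s : ℝ) (ξ : Fin n → ℝ), Measurable (fun x => f x s ξ))
    (hfcont : ∀ᵐ x ∂(volume.restrict Ω),
      Continuous (fun sξ : ℝ × (Fin n → ℝ) => f x sξ.1 sξ.2))
    (C : ℝ) (hC : 0 < C)
    (q : (Fin n → ℝ) → ℝ) (hqc : ContinuousOn q (closure Ω))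
    (hq1 : ∀ x ∈ closure Ω, 1 < q x)
    (hqpM : ∀ x ∈ Ω, q x ≤ pM x)
    (q' : (Fin n → ℝ) → ℝ) (hq' : ∀ x, q' x = q x / (q x - 1))
    (k : (Fin n → ℝ) → ℝ) (hkm : Measurable k)
    (hkint : IntegrableOn (fun x => |k x| ^ q' x) Ω)
    (r : Fin n → (Fin n → ℝ) → ℝ)
    (hrm : ∀ i, Measurable (r i)) (hrnn : ∀ i x, 0 ≤ r i x)
    (hr : ∀ i, ∀ x ∈ Ω, 1 < r i x * q' x ∧ r i x * q' x ≤ p i x)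
    (hgrowth : ∀ᵐ x ∂(volume.restrict Ω), ∀ (s : ℝ) (ξ : Fin n → ℝ),
      |f x s ξ| ≤ C * (|k x| + |s| ^ (q x - 1) + ∑ i, |ξ i| ^ r i x))
    (u : (Fin n → ℝ) → ℝ) (hum : Measurable u)
    (huint : IntegrableOn (fun x => |u x| ^ pM x) Ω)
    (g : (Fin n → ℝ) → Fin n → ℝ) (hgm : ∀ i, Measurable (fun x => g x i))
    (hgint : ∀ i, IntegrableOn (fun x => |g x i| ^ p i x) Ω) :
    IntegrableOn (fun x => |f x (u x) (g x)| ^ q' x) Ω := by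
  classical
  have hΩm : MeasurableSet Ω := hΩo.measurableSet
  set μ : Measure (Fin n → ℝ) := volume.restrict Ω with hμdef
  -- compactness and uniform bounds for q'
  obtain ⟨x₀, hx₀⟩ := hΩc.nonempty
  have hclne : (closure Ω).Nonempty := ⟨x₀, subset_closure hx₀⟩
  have hcpt : IsCompact (closure Ω) := hΩb.isCompact_closure
  obtain ⟨xm, hxm, hxmmin⟩ := hcpt.exists_isMinOn hclne hqc
  obtain ⟨xM, hxM, hxMmax⟩ := hcpt.exists_isMaxOn hclne hqc
  have hm1 : 1 < q xm := hq1 _ hxm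
  have hMpos : 0 < q xM := lt_trans one_pos (hq1 _ hxM)
  set Q : ℝ := q xM / (q xm - 1) with hQdef
  have hq'facts : ∀ x ∈ Ω, 0 < q' x ∧ q' x ≤ Q := by
    intro x hx
    have hxc := subset_closure hx
    have h1 : 1 < q x := hq1 _ hxc
    have hle : q x ≤ q xM := hxMmax hxc
    have hge : q xm ≤ q x := hxmmin hxc
    rw [hq' x]
    exact ⟨div_pos (by linarith) (by linarith),
      div_le_div₀ hMpos.le hle (by linarith) (by linarith)⟩
  have hQpos : 0 < Q := lt_of_lt_of_le (hq'facts x₀ hx₀).1 (hq'facts x₀ hx₀).2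
  set P : ℝ := (2:ℝ) ^ Q with hPdef
  have hP1 : (1:ℝ) ≤ P := Real.one_le_rpow one_le_two hQpos.le
  have hP0 : (0:ℝ) ≤ P := le_trans zero_le_one hP1
  -- measurability of the composition
  have hNnull : μ {x | ¬ Continuous (fun sξ : ℝ × (Fin n → ℝ) => f x sξ.1 sξ.2)} = 0 :=
    ae_iff.mp hfcont
  obtain ⟨N, hNsub, hNm, hNz⟩ := exists_measurable_superset_of_null hNnull
  set F : (ℝ × (Fin n → ℝ)) → (Fin n → ℝ) → ℝ :=
    fun sξ x => if x ∈ N then 0 else f x sξ.1 sξ.2 with hF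
  have hFc : ∀ x, Continuous fun sξ => F sξ x := by
    intro x
    by_cases hx : x ∈ N
    · simp only [hF, hx, if_true]
      exact continuous_const
    · simp only [hF, hx, if_false]
      by_contra hcont
      exact hx (hNsub hcont)
  have hFm : ∀ sξ, Measurable (F sξ) := fun sξ =>
    Measurable.ite hNm measurable_const (hfmeas _ _)
  have hunc : Measurable (Function.uncurry F) :=
    measurable_uncurry_of_continuous_of_measurable hFc hFm
  have hgmm : Measurable g := measurable_pi_iff.mpr hgm
  have hcomp : Measurable fun x => F (u x, g x) x :=
    hunc.comp ((hum.prodMk hgmm).prodMk measurable_id)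
  have haeN : ∀ᵐ x ∂μ, x ∉ N := by
    rw [ae_iff]
    simpa using hNz
  have haeF : (fun x => f x (u x) (g x)) =ᵐ[μ] fun x => F (u x, g x) x := by
    filter_upwards [haeN] with x hx
    simp [hF, hx]
  have hq'cont : ContinuousOn q' Ω := by
    have hqΩ : ContinuousOn q Ω := hqc.mono subset_closure
    have h : ContinuousOn (fun x => q x / (q x - 1)) Ω := by
      refine hqΩ.div (hqΩ.sub continuousOn_const) ?_
      intro x hx
      have := hq1 _ (subset_closure hx)
      intro h0
      have : q x - 1 > 0 := by linarith
      linarith [h0 ▸ this]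
    have : q' = fun x => q x / (q x - 1) := funext hq'
    rw [this]
    exact h
  have hq'am : AEMeasurable q' μ := hq'cont.aemeasurable hΩm
  have htargetm : AEStronglyMeasurable (fun x => |f x (u x) (g x)| ^ q' x) μ := by
    have h1 : AEMeasurable (fun x => |F (u x, g x) x| ^ q' x) μ :=
      hcomp.abs.aemeasurable.pow hq'am
    refine h1.aestronglyMeasurable.congr ?_
    filter_upwards [haeF] with x hx
    simp [hx]
  -- the integrable bound
  set C1 : ℝ := max C 1 with hC1def
  have hC11 : (1:ℝ) ≤ C1 := le_max_right C 1
  set K0 : ℝ := C1 ^ Q * P ^ (n + 2) with hK0def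
  have hconst : Integrable (fun _ : Fin n → ℝ => (1:ℝ)) μ := by
    have : IntegrableOn (fun _ : Fin n → ℝ => (1:ℝ)) Ω volume :=
      integrableOn_const hΩb.measure_lt_top.ne
    exact this
  have hBint : Integrable (fun x =>
      K0 * (|k x| ^ q' x + (|u x| ^ pM x + 1) + ∑ i, (|g x i| ^ p i x + 1))) μ := by
    refine Integrable.const_mul ?_ K0
    refine Integrable.add (Integrable.add hkint (huint.add hconst)) ?_
    exact integrable_finset_sum _ fun i _ => (hgint i).add hconst
  refine hBint.mono' htargetm ?_
  filter_upwards [hgrowth, ae_restrict_mem hΩm] with x hfx hx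
  obtain ⟨ht0, htQ⟩ := hq'facts x hx
  have hq1x : 1 < q x := hq1 _ (subset_closure hx)
  have habs : (0:ℝ) ≤ |f x (u x) (g x)| := abs_nonneg _
  rw [Real.norm_of_nonneg (Real.rpow_nonneg habs _)]
  set t : ℝ := q' x with htdef
  set T1 : ℝ := |k x| ^ t with hT1def
  set T2 : ℝ := |u x| ^ pM x + 1 with hT2def
  set T3 : ℝ := ∑ i, (|g x i| ^ p i x + 1) with hT3def
  have hT1nn : 0 ≤ T1 := Real.rpow_nonneg (abs_nonneg _) _
  have hT2nn : 0 ≤ T2 := by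
    have := Real.rpow_nonneg (abs_nonneg (u x)) (pM x); rw [hT2def]; linarith
  have hT3nn : 0 ≤ T3 := Finset.sum_nonneg fun i _ => by
    have := Real.rpow_nonneg (abs_nonneg (g x i)) (p i x); linarith
  set A : ℝ := |k x| with hAdef
  set B2 : ℝ := |u x| ^ (q x - 1) with hB2def
  set Sg : ℝ := ∑ i, |g x i| ^ r i x with hSgdef
  have hAnn : 0 ≤ A := abs_nonneg _
  have hB2nn : 0 ≤ B2 := Real.rpow_nonneg (abs_nonneg _) _
  have hSgnn : 0 ≤ Sg := Finset.sum_nonneg fun i _ => Real.rpow_nonneg (abs_nonneg _) _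
  have hSnn : 0 ≤ A + B2 + Sg := by linarith
  -- exponent collapsing facts
  have hqid : (q x - 1) * t = q x := by
    have hne : q x - 1 ≠ 0 := ne_of_gt (by linarith)
    rw [htdef, hq' x]; field_simp
  have hB2t : B2 ^ t ≤ T2 := by
    rw [hB2def, ← Real.rpow_mul (abs_nonneg (u x)), hqid, hT2def]
    exact aux_pow_bound _ _ _ (abs_nonneg _) (by linarith) (hqpM x hx)
  have hgit : ∀ i, (|g x i| ^ r i x) ^ t ≤ |g x i| ^ p i x + 1 := by
    intro i
    rw [← Real.rpow_mul (abs_nonneg (g x i))]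
    exact aux_pow_bound _ _ _ (abs_nonneg _) (by linarith [(hr i x hx).1]) (hr i x hx).2
  have hSgt : Sg ^ t ≤ P ^ n * T3 := by
    have h1 : Sg ^ t ≤ P ^ n * ∑ i, (|g x i| ^ r i x) ^ t := by
      have := aux_sum Finset.univ (fun i => |g x i| ^ r i x) t Q
        (fun i => Real.rpow_nonneg (abs_nonneg _) _) ht0 htQ
      simpa [hSgdef, hPdef] using this
    refine h1.trans ?_
    rw [hT3def]
    exact mul_le_mul_of_nonneg_left (Finset.sum_le_sum fun i _ => hgit i) (pow_nonneg hP0 n)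
  have hCt : C ^ t ≤ C1 ^ Q := by
    calc C ^ t ≤ C1 ^ t := Real.rpow_le_rpow hC.le (le_max_left C 1) ht0.le
      _ ≤ C1 ^ Q := Real.rpow_le_rpow_of_exponent_le hC11 htQ
  have hSfinal : (A + B2 + Sg) ^ t ≤ P ^ (n + 2) * (T1 + T2 + T3) := by
    have step1 : (A + B2 + Sg) ^ t ≤ P * ((A + B2) ^ t + Sg ^ t) :=
      aux_two _ _ _ _ (by linarith) hSgnn ht0.le htQ
    have step2 : (A + B2) ^ t ≤ P * (A ^ t + B2 ^ t) :=
      aux_two _ _ _ _ hAnn hB2nn ht0.le htQ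
    have hAt : A ^ t = T1 := rfl
    have step3 : (A + B2) ^ t ≤ P * (T1 + T2) := by
      refine step2.trans ?_
      have := mul_le_mul_of_nonneg_left (add_le_add (le_of_eq hAt) hB2t) hP0
      exact this
    have e1 : P * P ≤ P ^ (n + 2) := by
      calc P * P = P ^ 2 := (sq P).symm
        _ ≤ P ^ (n + 2) := pow_le_pow_right₀ hP1 (by omega)
    have e2 : P * P ^ n ≤ P ^ (n + 2) := by
      calc P * P ^ n = P ^ (n + 1) := by ring
        _ ≤ P ^ (n + 2) := pow_le_pow_right₀ hP1 (by omega)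
    calc (A + B2 + Sg) ^ t ≤ P * ((A + B2) ^ t + Sg ^ t) := step1
      _ ≤ P * (P * (T1 + T2) + P ^ n * T3) :=
          mul_le_mul_of_nonneg_left (add_le_add step3 hSgt) hP0
      _ = (P * P) * (T1 + T2) + (P * P ^ n) * T3 := by ring
      _ ≤ P ^ (n + 2) * (T1 + T2) + P ^ (n + 2) * T3 :=
          add_le_add (mul_le_mul_of_nonneg_right e1 (by linarith))
            (mul_le_mul_of_nonneg_right e2 hT3nn)
      _ = P ^ (n + 2) * (T1 + T2 + T3) := by ring
  calc |f x (u x) (g x)| ^ t ≤ (C * (A + B2 + Sg)) ^ t :=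
        Real.rpow_le_rpow habs (hfx (u x) (g x)) ht0.le
    _ = C ^ t * (A + B2 + Sg) ^ t := Real.mul_rpow hC.le hSnn
    _ ≤ C1 ^ Q * (P ^ (n + 2) * (T1 + T2 + T3)) := by
        refine mul_le_mul hCt hSfinal (Real.rpow_nonneg hSnn t) ?_
        exact Real.rpow_nonneg (by positivity) Q
    _ = K0 * (T1 + T2 + T3) := by rw [hK0def]; ring
end

section
/- Admissible affine homotopies are of class (S_+)_T: let E be a bounded open set in X, let T : Ē → X* be bounded, continuous and of class (S_+), and let F, S : Ē → X be demicontinuous and of class (S_+)_T. Define H(t, u) := (1 − t) F u + t S u for (t, u) ∈ [0,1] × Ē. Then for every sequence (t_n) ⊂ [0,1] with t_n → t and every sequence (u_n) ⊂ Ē with u_n ⇀ u in X, T u_n ⇀ y in X*, and limsup_n (T u_n − y)(H(t_n, u_n)) ≤ 0, one has u_n → u strongly in X. -/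
open Filter Topology

/-- Convex combinations in `ℝ`: upper bound. -/
lemma convex_comb_le {τ x y M : ℝ} (h0 : 0 ≤ τ) (h1 : τ ≤ 1) (hx : x ≤ M) (hy : y ≤ M) :
    (1 - τ) * x + τ * y ≤ M := by nlinarith

/-- Convex combinations in `ℝ`: lower bound by the smaller endpoint (left case). -/
lemma left_le_convex_comb {τ x y : ℝ} (h0 : 0 ≤ τ) (hxy : x ≤ y) :
    x ≤ (1 - τ) * x + τ * y := by nlinarith

/-- Convex combinations in `ℝ`: lower bound by the smaller endpoint (right case). -/
lemma right_le_convex_comb {τ x y : ℝ} (h1 : τ ≤ 1) (hxy : y ≤ x) :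
    y ≤ (1 - τ) * x + τ * y := by nlinarith

/-- If a real sequence is not bounded above, its `limsup` is the junk value `0`. -/
lemma limsup_le_zero_of_not_bdd {g : ℕ → ℝ} (h : ¬ IsBoundedUnder (· ≤ ·) atTop g) :
    limsup g atTop ≤ 0 := by
  rw [limsup_eq]
  have hempty : {a : ℝ | ∀ᶠ n in atTop, g n ≤ a} = ∅ := by
    by_contra hne
    rcases Set.nonempty_iff_ne_empty.2 hne with ⟨M, hM⟩
    exact h ⟨M, hM⟩
  rw [hempty, Real.sInf_empty]

/-- Key limsup comparison lemma along a subsequence. -/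
lemma limsup_subseq_le_zero {a c : ℕ → ℝ} (hc : limsup c atTop ≤ 0)
    (hcb : IsBoundedUnder (· ≤ ·) atTop c)
    {σ : ℕ → ℕ} (hσ : Tendsto σ atTop atTop)
    (hle : ∀ᶠ k in atTop, a (σ k) ≤ c (σ k)) :
    limsup (fun k => a (σ k)) atTop ≤ 0 := by
  by_cases hco : IsCoboundedUnder (· ≤ ·) atTop (fun k => a (σ k))
  · by_contra hpos
    push_neg at hpos
    set L := limsup (fun k => a (σ k)) atTop with hL
    have hev : ∀ᶠ n in atTop, c n < L / 2 :=
      eventually_lt_of_limsup_lt (lt_of_le_of_lt hc (by linarith)) hcb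
    have hev2 : ∀ᶠ k in atTop, c (σ k) < L / 2 := hσ.eventually hev
    have hev3 : ∀ᶠ k in atTop, a (σ k) ≤ L / 2 := by
      filter_upwards [hle, hev2] with k h1 h2
      linarith
    have := limsup_le_of_le hco hev3
    linarith
  · rw [limsup_eq]
    have : ¬ BddBelow {x : ℝ | ∀ᶠ n in atTop, a (σ n) ≤ x} := by
      intro ⟨b, hb⟩
      exact hco ⟨b, fun x hx => hb hx⟩
    rw [Real.sInf_of_not_bddBelow this]

/-- Admissible affine homotopies `H(t,u) = (1−t)Fu + tSu` between maps of class `(S₊)_T`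
are of class `(S₊)_T`. -/
theorem affine_homotopy_SplusT
    {X : Type*} [NormedAddCommGroup X] [NormedSpace ℝ X] [CompleteSpace X]
    (hrefl : Function.Surjective (NormedSpace.inclusionInDoubleDual ℝ X))
    (E : Set X) (hEo : IsOpen E) (hEb : Bornology.IsBounded E)
    (T : X → X →L[ℝ] ℝ)
    (hTb : ∀ B ⊆ closure E, Bornology.IsBounded B → Bornology.IsBounded (T '' B))
    (hTc : ContinuousOn T (closure E))
    (hTSplus : ∀ (u : ℕ → X) (ulim : X), (∀ k, u k ∈ closure E) → WeakConv u ulim →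
      limsup (fun k => T (u k) (u k - ulim)) atTop ≤ 0 → Tendsto u atTop (𝓝 ulim))
    (F S : X → X)
    (hFdemi : ∀ (u : ℕ → X) (ulim : X), (∀ k, u k ∈ closure E) → ulim ∈ closure E →
      Tendsto u atTop (𝓝 ulim) → WeakConv (fun k => F (u k)) (F ulim))
    (hSdemi : ∀ (u : ℕ → X) (ulim : X), (∀ k, u k ∈ closure E) → ulim ∈ closure E →
      Tendsto u atTop (𝓝 ulim) → WeakConv (fun k => S (u k)) (S ulim))
    (hFSplusT : ∀ (u : ℕ → X) (ulim : X) (y : X →L[ℝ] ℝ), (∀ k, u k ∈ closure E) →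
      WeakConv u ulim → WeakConvDual (fun k => T (u k)) y →
      limsup (fun k => (T (u k) - y) (F (u k))) atTop ≤ 0 → Tendsto u atTop (𝓝 ulim))
    (hSSplusT : ∀ (u : ℕ → X) (ulim : X) (y : X →L[ℝ] ℝ), (∀ k, u k ∈ closure E) →
      WeakConv u ulim → WeakConvDual (fun k => T (u k)) y →
      limsup (fun k => (T (u k) - y) (S (u k))) atTop ≤ 0 → Tendsto u atTop (𝓝 ulim))
    (t : ℕ → ℝ) (ht : ∀ k, t k ∈ Set.Icc (0 : ℝ) 1) (tlim : ℝ)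
    (htlim : Tendsto t atTop (𝓝 tlim))
    (u : ℕ → X) (hu : ∀ k, u k ∈ closure E) (ulim : X) (hw : WeakConv u ulim)
    (y : X →L[ℝ] ℝ) (hy : WeakConvDual (fun k => T (u k)) y)
    (hls : limsup (fun k => (T (u k) - y) ((1 - t k) • F (u k) + t k • S (u k)))
      atTop ≤ 0) :
    Tendsto u atTop (𝓝 ulim) := by
  classical
  set a : ℕ → ℝ := fun k => (T (u k) - y) (F (u k)) with ha_def
  set b : ℕ → ℝ := fun k => (T (u k) - y) (S (u k)) with hb_def
  have hc_eq : ∀ k, (T (u k) - y) ((1 - t k) • F (u k) + t k • S (u k))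
      = (1 - t k) * a k + t k * b k := by
    intro k
    simp [ha_def, hb_def, map_add, map_smul, smul_eq_mul]
  set c : ℕ → ℝ := fun k => (1 - t k) * a k + t k * b k with hc_def
  have hls' : limsup c atTop ≤ 0 := by
    have : (fun k => (T (u k) - y) ((1 - t k) • F (u k) + t k • S (u k))) = c := by
      funext k; exact hc_eq k
    rwa [this] at hls
  -- junk cases: if a or b is unbounded above, its limsup is ≤ 0 and we conclude directly
  by_cases hA : IsBoundedUnder (· ≤ ·) atTop a
  swap
  · exact hFSplusT u ulim y hu hw hy (limsup_le_zero_of_not_bdd hA)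
  by_cases hB : IsBoundedUnder (· ≤ ·) atTop b
  swap
  · exact hSSplusT u ulim y hu hw hy (limsup_le_zero_of_not_bdd hB)
  -- now c is bounded above
  obtain ⟨Ma, hMa⟩ := hA
  obtain ⟨Mb, hMb⟩ := hB
  have hcb : IsBoundedUnder (· ≤ ·) atTop c := by
    refine ⟨max Ma Mb, ?_⟩
    rw [eventually_map] at hMa hMb ⊢
    filter_upwards [hMa, hMb] with k h1 h2
    exact convex_comb_le (ht k).1 (ht k).2 (le_trans h1 (le_max_left _ _))
      (le_trans h2 (le_max_right _ _))
  refine tendsto_of_subseq_tendsto fun ns hns => ?_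
  by_cases hfreq : ∃ᶠ k in atTop, a (ns k) ≤ b (ns k)
  · obtain ⟨φ, hφmono, hφ⟩ := extraction_of_frequently_atTop hfreq
    set σ : ℕ → ℕ := ns ∘ φ with hσ_def
    have hσ : Tendsto σ atTop atTop := hns.comp hφmono.tendsto_atTop
    have hle : ∀ᶠ k in atTop, a (σ k) ≤ c (σ k) := by
      refine Eventually.of_forall fun k => ?_
      exact left_le_convex_comb (ht (σ k)).1 (hφ k)
    have hlim : limsup (fun k => a (σ k)) atTop ≤ 0 :=
      limsup_subseq_le_zero hls' hcb hσ hle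
    have : Tendsto (fun k => u (σ k)) atTop (𝓝 ulim) := by
      refine hFSplusT (fun k => u (σ k)) ulim y (fun k => hu (σ k))
        (fun f => (hw f).comp hσ) (fun x => (hy x).comp hσ) hlim
    exact ⟨φ, this⟩
  · have hev : ∀ᶠ k in atTop, b (ns k) < a (ns k) := by
      have := (not_frequently.mp hfreq)
      filter_upwards [this] with k hk
      exact lt_of_not_ge hk
    have hle : ∀ᶠ k in atTop, b (ns k) ≤ c (ns k) := by
      filter_upwards [hev] with k hk
      exact right_le_convex_comb (ht (ns k)).2 hk.le
    have hlim : limsup (fun k => b (ns k)) atTop ≤ 0 :=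
      limsup_subseq_le_zero hls' hcb hns hle
    have : Tendsto (fun k => u (ns k)) atTop (𝓝 ulim) := by
      refine hSSplusT (fun k => u (ns k)) ulim y (fun k => hu (ns k))
        (fun f => (hw f).comp hns) (fun x => (hy x).comp hns) hlim
    exact ⟨id, this⟩
end
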